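/- If an open list cs of length m is correct up to n (its ground members are exactly 1,…,n) and cs unifies with a list of n distinct variables, then m = n and the unified instance is a list (of length n) whose members are a permutation of 1,…,n. -/

import Mathlib

/-- Terms: variables, number constants, and list constructors. -/
inductive Tm : Type
  | var : ℕ → Tm
  | const : ℕ → Tm
  | nil : Tm
  | cons : Tm → Tm → Tm
deriving DecidableEq

/-- The set of variables of a term. -/
def Tm.vars : Tm → Finset ℕ
  | .var x => {x}
  | .const _ => ∅
  | .nil => ∅
  | .cons s t => s.vars ∪ t.vars

/-- A term is ground if it has no variables. -/
def Tm.Ground (t : Tm) : Prop := t.vars = ∅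

/-- Boolean groundness test. -/
def Tm.groundB : Tm → Bool
  | .var _ => false
  | .const _ => true
  | .nil => true
  | .cons s t => s.groundB && t.groundB

/-- Applying a substitution to a term. -/
def Tm.subst (σ : ℕ → Tm) : Tm → Tm
  | .var x => σ x
  | .const c => .const c
  | .nil => .nil
  | .cons s t => .cons (s.subst σ) (t.subst σ)

/-- The open list `[t₁,…,tₙ|v]` with members `ts` and open-list variable `v`. -/
def mkOpen (ts : List Tm) (v : ℕ) : Tm := ts.foldr .cons (.var v)

/-- The (closed) list `[t₁,…,tₙ]` with members `ts`. -/
def mkList (ts : List Tm) : Tm := ts.foldr .cons .nil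

/-- `(ts, v)` describes a g.v.d. (a linear open list with pairwise distinct
    members, each member ground or a variable). -/
def IsGVD (ts : List Tm) (v : ℕ) : Prop :=
  (∀ t ∈ ts, t.Ground ∨ ∃ x, t = .var x) ∧
  ts.Nodup ∧
  (ts.map Tm.vars).Pairwise Disjoint ∧
  ∀ t ∈ ts, v ∉ t.vars

/-- `θ` unifies `s` and `t`. -/
def IsUnifier (s t : Tm) (θ : ℕ → Tm) : Prop := s.subst θ = t.subst θ

/-- `θ` is a most general unifier of `s` and `t`. -/
def IsMGU (s t : Tm) (θ : ℕ → Tm) : Prop :=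
  IsUnifier s t θ ∧ ∀ σ, IsUnifier s t σ → ∃ δ, ∀ x, σ x = (θ x).subst δ

/-- `s` is the `k`-th member (1-based) of the term `t`,
    i.e. `t = [t₁,…,t_{k-1},s|t₀]`. -/
inductive KthMem : Tm → ℕ → Tm → Prop
  | head (s t : Tm) : KthMem (.cons s t) 1 s
  | tail {t : Tm} {k : ℕ} {s : Tm} (a : Tm) : KthMem t k s → KthMem (.cons a t) (k + 1) s

/-- The open list `cs` represents a correct placement up to row `m`:
    it is a g.v.d., its ground members are exactly the queens `1,…,m`
    (represented as `const j`), and their up diagonal numbers `k + j - i`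
    and down diagonal numbers `k + i - j` (w.r.t. any reference row `i`;
    distinctness does not depend on `i`) are respectively pairwise
    distinct. -/
def CorrectUpTo (cs : Tm) (m : ℕ) : Prop :=
  (∃ ts v, cs = mkOpen ts v ∧ IsGVD ts v) ∧
  (∀ j : ℕ, 1 ≤ j → j ≤ m → ∃ k, KthMem cs k (.const j)) ∧
  (∀ k : ℕ, ∀ s : Tm, KthMem cs k s → s.Ground →
      ∃ j : ℕ, 1 ≤ j ∧ j ≤ m ∧ s = .const j) ∧
  (∀ j j' k k' : ℕ, KthMem cs k (.const j) → KthMem cs k' (.const j') →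
      j ≠ j' → k + j ≠ k' + j' ∧ (k : ℤ) - j ≠ (k' : ℤ) - j')

/-- The pair `(us, ds)` is correct up to `m` w.r.t. the row `i` and `cs`:
    each queen `j ∈ {1,…,m}` is a member of `cs`, and whenever its up
    (resp. down) diagonal number `l` in `cs` w.r.t. `i` is positive, the
    `l`-th member of `us` (resp. `ds`) is `j`. -/
def PairCorrect (us ds : Tm) (m i : ℕ) (cs : Tm) : Prop :=
  ∀ j : ℕ, 1 ≤ j → j ≤ m →
    (∃ k, KthMem cs k (.const j)) ∧
    ∀ k : ℕ, KthMem cs k (.const j) →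
      (∀ l : ℕ, (l : ℤ) = (k : ℤ) + j - i → 0 < l → KthMem us l (.const j)) ∧
      (∀ l : ℕ, (l : ℤ) = (k : ℤ) + i - j → 0 < l → KthMem ds l (.const j))

lemma kthMem_mkOpen_mem {ts : List Tm} {v : ℕ} {k : ℕ} {s : Tm}
    (h : KthMem (mkOpen ts v) k s) : s ∈ ts := by
  induction ts generalizing k with
  | nil => cases h
  | cons a rest ih =>
    cases h with
    | head => exact List.mem_cons_self
    | tail _ h' => exact List.mem_cons_of_mem _ (ih h')

lemma subst_foldr (σ : ℕ → Tm) (l : List Tm) (t : Tm) :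
    (l.foldr Tm.cons t).subst σ = (l.map (Tm.subst σ)).foldr Tm.cons (t.subst σ) := by
  induction l with
  | nil => rfl
  | cons a l ih => simp [Tm.subst, ih]

lemma foldr_len_le {l₁ : List Tm} {t : Tm} {l₂ : List Tm}
    (h : l₁.foldr Tm.cons t = l₂.foldr Tm.cons Tm.nil) : l₁.length ≤ l₂.length := by
  induction l₁ generalizing l₂ with
  | nil => simp
  | cons a l₁ ih =>
    cases l₂ with
    | nil => exact absurd h (by simp)
    | cons b l₂ =>
      simp only [List.foldr_cons, Tm.cons.injEq] at h
      simpa using ih h.2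

lemma foldr_eq_of_len_eq {l₁ : List Tm} {t : Tm} {l₂ : List Tm}
    (h : l₁.foldr Tm.cons t = l₂.foldr Tm.cons Tm.nil)
    (hl : l₁.length = l₂.length) : l₁ = l₂ ∧ t = Tm.nil := by
  induction l₁ generalizing l₂ with
  | nil =>
    cases l₂ with
    | nil => exact ⟨rfl, h⟩
    | cons b l₂ => simp at hl
  | cons a l₁ ih =>
    cases l₂ with
    | nil => simp at hl
    | cons b l₂ =>
      simp only [List.foldr_cons, Tm.cons.injEq] at h
      obtain ⟨h1, h2⟩ := h
      obtain ⟨h3, h4⟩ := ih h2 (by simpa using hl)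
      exact ⟨by rw [h1, h3], h4⟩

/-- if the open list `cs = [t₁,…,tₘ|v]` is correct up to `n`
    and unifies with a list of `n` distinct fresh variables, then `m = n`
    and the unified instance is a list of length `n` whose members are a
    permutation of `1,…,n`. -/
theorem unify_with_var_list (ts : List Tm) (v : ℕ) (m n : ℕ)
    (hm : ts.length = m) (hc : CorrectUpTo (mkOpen ts v) n)
    (f : Fin n → ℕ) (hf : Function.Injective f)
    (hfresh : ∀ a, f a ∉ (mkOpen ts v).vars)
    (hunif : ∃ σ, IsUnifier (mkOpen ts v) (mkList (List.ofFn fun a => Tm.var (f a))) σ) :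
    m = n ∧
    ∀ θ, IsMGU (mkOpen ts v) (mkList (List.ofFn fun a => Tm.var (f a))) θ →
      ∃ q : List ℕ, q.Perm (List.range' 1 n) ∧
        (mkOpen ts v).subst θ = mkList (q.map Tm.const) := by
  classical
  -- every const j, 1 ≤ j ≤ n, is a member of ts
  have hmem : ∀ j : ℕ, 1 ≤ j → j ≤ n → Tm.const j ∈ ts := by
    intro j h1 h2
    obtain ⟨k, hk⟩ := hc.2.1 j h1 h2
    exact kthMem_mkOpen_mem hk
  set C : List Tm := (List.range' 1 n).map Tm.const with hC
  have hCsub : C ⊆ ts := by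
    intro t ht
    simp only [hC, List.mem_map, List.mem_range'] at ht
    obtain ⟨j, hj, rfl⟩ := ht
    exact hmem j (by omega) (by omega)
  have hCnodup : C.Nodup :=
    (List.nodup_range' 1 Nat.one_pos).map (fun a b h => by injection h)
  have hCsp : List.Subperm C ts := hCnodup.subperm hCsub
  have hCn : C.length = n := by simp [hC]
  -- from unifiability, ts.length ≤ n
  obtain ⟨σ, hσ⟩ := hunif
  have hle : ts.length ≤ n := by
    have := hσ
    unfold IsUnifier mkOpen mkList at this
    rw [subst_foldr, subst_foldr] at this
    have h2 := foldr_len_le this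
    simpa using h2
  have hge : n ≤ ts.length := by
    have := hCsp.length_le
    omega
  have hlen : ts.length = n := le_antisymm hle hge
  have hperm : List.Perm C ts := hCsp.perm_of_length_le (by omega)
  -- ts consists solely of constants
  have hconst : ∀ t ∈ ts, ∃ j, t = Tm.const j := by
    intro t ht
    have : t ∈ C := hperm.mem_iff.2 ht
    simp only [hC, List.mem_map] at this
    obtain ⟨j, _, rfl⟩ := this
    exact ⟨j, rfl⟩
  refine ⟨by omega, ?_⟩
  intro θ hθ
  -- extraction function
  set g : Tm → ℕ := fun t => match t with | Tm.const j => j | _ => 0 with hg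
  refine ⟨ts.map g, ?_, ?_⟩
  · have := (hperm.symm.map g)
    have heq : (C.map g) = List.range' 1 n := by
      rw [hC, List.map_map]
      have : (g ∘ Tm.const) = id := by funext j; rfl
      rw [this, List.map_id]
    rwa [heq] at this
  · have hts : (ts.map g).map Tm.const = ts := by
      rw [List.map_map]
      conv_rhs => rw [← List.map_id ts]
      exact List.map_congr_left (fun t ht => by
        obtain ⟨j, rfl⟩ := hconst t ht; rfl)
    rw [hts]
    have hsub : ts.map (Tm.subst θ) = ts := by
      conv_rhs => rw [← List.map_id ts]
      exact List.map_congr_left (fun t ht => by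
        obtain ⟨j, rfl⟩ := hconst t ht; rfl)
    have hu := hθ.1
    unfold IsUnifier mkOpen mkList at hu
    rw [subst_foldr, subst_foldr] at hu
    have hlen2 : (ts.map (Tm.subst θ)).length =
        ((List.ofFn fun a => Tm.var (f a)).map (Tm.subst θ)).length := by
      simp [hlen]
    obtain ⟨_, hnil⟩ := foldr_eq_of_len_eq hu hlen2
    unfold mkOpen mkList
    rw [subst_foldr]
    simp only [Tm.subst] at hnil ⊢
    rw [hsub, hnil]
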